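/- Let b ∈ [0,3]. Let u : ℝ → ℝ be continuously differentiable with both u and u' square-integrable on ℝ. Let a₀, b₀ ∈ ℝ with a₀ < b₀, suppose u(x) = 0 for every x ∈ [a₀,b₀], and suppose F(a₀) = F(b₀), where F(x) = -(1/2) ∫_ℝ sgn(x-y) e^{-|x-y|} ((b/2) u(y)² + ((3-b)/2) u'(y)²) dy and sgn denotes the sign function (sgn 0 = 0). Then u(x) = 0 for every x ∈ ℝ. -/

import Mathlib

open MeasureTheory Real

lemma measurable_realSign : Measurable Real.sign := by
  unfold Real.sign
  exact Measurable.ite (measurableSet_lt measurable_id measurable_const) measurable_const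
    (Measurable.ite (measurableSet_lt measurable_const measurable_id) measurable_const
      measurable_const)

lemma abs_realSign_le_one (r : ℝ) : |Real.sign r| ≤ 1 := by
  rcases Real.sign_apply_eq r with h | h | h <;> rw [h] <;> norm_num

theorem b_equation_unique_continuation_time_slice
    (b : ℝ) (hb : b ∈ Set.Icc (0 : ℝ) 3)
    (u : ℝ → ℝ) (hu : ContDiff ℝ 1 u)
    (huL2 : MemLp u 2 (volume : Measure ℝ))
    (hu'L2 : MemLp (deriv u) 2 (volume : Measure ℝ))
    (a₀ b₀ : ℝ) (hab : a₀ < b₀)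
    (hu_zero : ∀ x ∈ Set.Icc a₀ b₀, u x = 0)
    (F : ℝ → ℝ)
    (hF : ∀ x, F x = -(1/2) * ∫ y : ℝ,
        Real.sign (x - y) * Real.exp (-|x - y|) *
          ((b/2) * u y ^ 2 + ((3 - b)/2) * deriv u y ^ 2))
    (hFab : F a₀ = F b₀) :
    ∀ x : ℝ, u x = 0 := by
  obtain ⟨hb0, hb3⟩ := hb
  set g : ℝ → ℝ := fun y => (b/2) * u y ^ 2 + ((3 - b)/2) * deriv u y ^ 2 with hg_def
  have hu_cont : Continuous u := hu.continuous
  have hu'_cont : Continuous (deriv u) := hu.continuous_deriv le_rfl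
  have hgc : Continuous g := by
    apply Continuous.add
    · exact continuous_const.mul ((hu_cont.pow 2))
    · exact continuous_const.mul ((hu'_cont.pow 2))
  have hg0 : ∀ y, 0 ≤ g y := fun y =>
    add_nonneg (mul_nonneg (by linarith) (sq_nonneg _))
      (mul_nonneg (by linarith) (sq_nonneg _))
  have hgint : Integrable g (volume : Measure ℝ) :=
    (huL2.integrable_sq.const_mul _).add (hu'L2.integrable_sq.const_mul _)
  set k : ℝ → ℝ → ℝ := fun x y => Real.sign (x - y) * Real.exp (-|x - y|) with hk_def
  have hk_meas : ∀ x, AEStronglyMeasurable (fun y => k x y) (volume : Measure ℝ) := by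
    intro x
    exact ((measurable_realSign.comp (measurable_const.sub measurable_id)).mul
      ((measurable_const.sub measurable_id).abs.neg.exp)).aestronglyMeasurable
  have hk_bound : ∀ x y, ‖k x y‖ ≤ 1 := by
    intro x y
    rw [hk_def]
    simp only [norm_mul, Real.norm_eq_abs]
    calc |Real.sign (x - y)| * |Real.exp (-|x - y|)| ≤ 1 * 1 := by
          apply mul_le_mul (abs_realSign_le_one _) ?_ (abs_nonneg _) zero_le_one
          rw [abs_of_pos (Real.exp_pos _)]
          exact Real.exp_le_one_iff.mpr (neg_nonpos.mpr (abs_nonneg _))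
      _ = 1 := one_mul 1
  have hint : ∀ x, Integrable (fun y => k x y * g y) (volume : Measure ℝ) := fun x =>
    hgint.bdd_mul (c := 1) (hk_meas x) (Filter.Eventually.of_forall (hk_bound x))
  -- value of the kernel
  have hk_lt : ∀ x y : ℝ, y < x → k x y = Real.exp (y - x) := by
    intro x y hyx
    rw [hk_def]
    simp only
    rw [Real.sign_of_pos (by linarith : (0:ℝ) < x - y), abs_of_pos (by linarith : (0:ℝ) < x - y),
      one_mul]
    ring_nf
  have hk_gt : ∀ x y : ℝ, x < y → k x y = -Real.exp (x - y) := by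
    intro x y hxy
    rw [hk_def]
    simp only
    rw [Real.sign_of_neg (by linarith : x - y < 0), abs_of_neg (by linarith : x - y < 0),
      neg_neg, neg_one_mul]
  -- g vanishes on the open interval
  have hg_in : ∀ y ∈ Set.Ioo a₀ b₀, g y = 0 := by
    intro y hy
    have hev : u =ᶠ[nhds y] (fun _ => (0:ℝ)) := by
      filter_upwards [Ioo_mem_nhds hy.1 hy.2] with z hz
      exact hu_zero z (Set.Ioo_subset_Icc_self hz)
    have hd : deriv u y = 0 := by
      rw [hev.deriv_eq]
      simp
    have huy : u y = 0 := hu_zero y (Set.Ioo_subset_Icc_self hy)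
    simp [hg_def, hd, huy]
  -- the difference integral vanishes
  have hI : ∫ y : ℝ, (k a₀ y - k b₀ y) * g y = 0 := by
    have h1 := hF a₀
    have h2 := hF b₀
    rw [hFab, h2] at h1
    have heq : ∫ y : ℝ, k a₀ y * g y = ∫ y : ℝ, k b₀ y * g y := by
      have := mul_left_cancel₀ (by norm_num : (-(1/2) : ℝ) ≠ 0) ((hF a₀).symm.trans (hFab.trans (hF b₀)))
      exact this
    rw [show (fun y => (k a₀ y - k b₀ y) * g y) = fun y => k a₀ y * g y - k b₀ y * g y by
      funext y; ring]
    rw [integral_sub (hint a₀) (hint b₀), heq, sub_self]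
  -- nonnegativity of the integrand away from the endpoints
  have hpos_lt : ∀ y, y < a₀ → 0 < k a₀ y - k b₀ y := by
    intro y hy
    rw [hk_lt a₀ y hy, hk_lt b₀ y (hy.trans hab), sub_pos]
    exact Real.exp_lt_exp.mpr (by linarith)
  have hpos_gt : ∀ y, b₀ < y → 0 < k a₀ y - k b₀ y := by
    intro y hy
    rw [hk_gt a₀ y (hab.trans hy), hk_gt b₀ y hy]
    have : Real.exp (a₀ - y) < Real.exp (b₀ - y) := Real.exp_lt_exp.mpr (by linarith)
    linarith
  have hne : ∀ᵐ y : ℝ, y ≠ a₀ ∧ y ≠ b₀ := by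
    have ha : ∀ᵐ y : ℝ, y ≠ a₀ := by
      rw [ae_iff]
      simp only [not_not, Set.setOf_eq_eq_singleton]
      exact measure_singleton a₀
    have hb' : ∀ᵐ y : ℝ, y ≠ b₀ := by
      rw [ae_iff]
      simp only [not_not, Set.setOf_eq_eq_singleton]
      exact measure_singleton b₀
    exact ha.and hb'
  have hnonneg : 0 ≤ᵐ[volume] fun y => (k a₀ y - k b₀ y) * g y := by
    filter_upwards [hne] with y ⟨hya, hyb⟩
    simp only [Pi.zero_apply]
    rcases lt_trichotomy y a₀ with h | h | h
    · exact mul_nonneg (hpos_lt y h).le (hg0 y)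
    · exact absurd h hya
    · rcases lt_trichotomy y b₀ with h' | h' | h'
      · simp [hg_in y ⟨h, h'⟩]
      · exact absurd h' hyb
      · exact mul_nonneg (hpos_gt y h').le (hg0 y)
  have hdint : Integrable (fun y => (k a₀ y - k b₀ y) * g y) (volume : Measure ℝ) := by
    rw [show (fun y => (k a₀ y - k b₀ y) * g y)
        = (fun y => k a₀ y * g y) - (fun y => k b₀ y * g y) from
      funext fun y => by simp [Pi.sub_apply, sub_mul]]
    exact (hint a₀).sub (hint b₀)
  have hzero : (fun y => (k a₀ y - k b₀ y) * g y) =ᵐ[volume] 0 :=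
    (integral_eq_zero_iff_of_nonneg_ae hnonneg hdint).mp hI
  have hgz : g =ᵐ[(volume : Measure ℝ)] (fun _ => 0) := by
    filter_upwards [hzero, hne] with y hy ⟨hya, hyb⟩
    simp only [Pi.zero_apply] at hy
    rcases lt_trichotomy y a₀ with h | h | h
    · exact (mul_eq_zero.mp hy).resolve_left (hpos_lt y h).ne'
    · exact absurd h hya
    · rcases lt_trichotomy y b₀ with h' | h' | h'
      · exact hg_in y ⟨h, h'⟩
      · exact absurd h' hyb
      · exact (mul_eq_zero.mp hy).resolve_left (hpos_gt y h').ne'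
  have hg_all : ∀ y, g y = 0 := by
    have := (hgc.ae_eq_iff_eq (volume : Measure ℝ) continuous_const).mp hgz
    intro y; exact congrFun this y
  rcases eq_or_lt_of_le hb0 with hb0' | hb0'
  · -- b = 0 : deriv u ≡ 0, so u is constant, hence 0
    have hd : ∀ y, deriv u y = 0 := by
      intro y
      have := hg_all y
      rw [hg_def] at this
      simp only [← hb0'] at this
      nlinarith [sq_nonneg (deriv u y)]
    intro x
    have := is_const_of_deriv_eq_zero (hu.differentiable one_ne_zero) hd x a₀
    rw [this, hu_zero a₀ ⟨le_refl _, hab.le⟩]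
  · -- 0 < b : u ≡ 0 directly
    intro x
    have hx := hg_all x
    rw [hg_def] at hx
    have h1 : u x ^ 2 = 0 := by nlinarith [sq_nonneg (u x), sq_nonneg (deriv u x)]
    exact (pow_eq_zero_iff two_ne_zero).mp h1
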